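/- Let A be a real symmetric r×r matrix with non-negative off-diagonal entries. If A has a positive eigenvalue, then there exists a vector m ∈ ℤ^r with all entries non-negative such that m^T A m > 0. -/

import Mathlib

open Matrix

/-- A real symmetric matrix with non-negative off-diagonal entries which has a positive
eigenvalue admits a non-negative integer vector `m` with `mᵀ A m > 0`. -/
theorem stmt_2 (r : ℕ) (A : Matrix (Fin r) (Fin r) ℝ)
    (hsym : A.IsSymm) (hoff : ∀ i j, i ≠ j → 0 ≤ A i j)
    (heig : ∃ μ : ℝ, 0 < μ ∧ ∃ v : Fin r → ℝ, v ≠ 0 ∧ A.mulVec v = μ • v) :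
    ∃ m : Fin r → ℤ, (∀ i, 0 ≤ m i) ∧
      0 < (fun i => (m i : ℝ)) ⬝ᵥ A.mulVec (fun i => (m i : ℝ)) := by
  obtain ⟨μ, hμ, v, hv, hAv⟩ := heig
  set q : (Fin r → ℝ) → ℝ := fun x => x ⬝ᵥ A.mulVec x with hq
  -- q as an explicit double sum
  have hqsum : ∀ x : Fin r → ℝ, q x = ∑ i, ∑ j, x i * (A i j * x j) := by
    intro x
    simp only [hq, dotProduct, mulVec, Finset.mul_sum]
  -- q v > 0
  have hvv : 0 < v ⬝ᵥ v := by
    rcases Function.ne_iff.mp hv with ⟨i, hi⟩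
    have h1 : ∀ j ∈ Finset.univ, (0:ℝ) ≤ v j * v j := fun j _ => mul_self_nonneg _
    have h2 : (0:ℝ) < v i * v i := mul_self_pos.mpr hi
    calc (0:ℝ) < v i * v i := h2
      _ ≤ ∑ j, v j * v j := Finset.single_le_sum h1 (Finset.mem_univ i)
      _ = v ⬝ᵥ v := rfl
  have hqv : 0 < q v := by
    have : q v = μ * (v ⬝ᵥ v) := by
      simp [hq, hAv, dotProduct_smul, smul_eq_mul]
    rw [this]; positivity
  -- w = componentwise abs of v
  set w : Fin r → ℝ := fun i => |v i| with hw
  have hwpos : ∀ i, 0 ≤ w i := fun i => abs_nonneg _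
  have hqw : 0 < q w := by
    have hle : q v ≤ q w := by
      rw [hqsum, hqsum]
      apply Finset.sum_le_sum
      intro i _
      apply Finset.sum_le_sum
      intro j _
      by_cases hij : i = j
      · subst hij
        have heq : |v i| * (A i i * |v i|) = v i * (A i i * v i) := by
          rw [show |v i| * (A i i * |v i|) = A i i * (|v i| * |v i|) from by ring,
            abs_mul_abs_self]; ring
        rw [heq]
      · have h0 := hoff i j hij
        have h1 : v i * v j ≤ |v i| * |v j| := by
          rw [← abs_mul]; exact le_abs_self _
        have : v i * (A i j * v j) = A i j * (v i * v j) := by ring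
        rw [this]
        have : |v i| * (A i j * |v j|) = A i j * (|v i| * |v j|) := by ring
        rw [this]
        exact mul_le_mul_of_nonneg_left h1 h0
    linarith
  -- continuity of q
  have hcont : Continuous q := by
    have : q = fun x => ∑ i, ∑ j, x i * (A i j * x j) := funext hqsum
    rw [this]
    apply continuous_finset_sum
    intro i _
    apply continuous_finset_sum
    intro j _
    exact ((continuous_apply i).mul (continuous_const.mul (continuous_apply j)))
  -- openness gives δ
  have hopen : IsOpen {x : Fin r → ℝ | 0 < q x} := isOpen_lt continuous_const hcont
  rcases Metric.isOpen_iff.mp hopen w hqw with ⟨δ, hδ, hball⟩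
  obtain ⟨n, hn⟩ := exists_nat_gt (1 / δ)
  have hn0 : (0:ℝ) < n := lt_of_le_of_lt (by positivity) hn
  have hδn : 1 / (n:ℝ) < δ := by
    have h1 : (1:ℝ) < n * δ := (div_lt_iff₀ hδ).mp hn
    rw [div_lt_iff₀ hn0]
    linarith [mul_comm (n:ℝ) δ]
  refine ⟨fun i => ⌈(n:ℝ) * w i⌉, ?_, ?_⟩
  · intro i
    exact Int.ceil_nonneg (by positivity)
  · set x : Fin r → ℝ := fun i => (⌈(n:ℝ) * w i⌉ : ℝ) / n with hx
    have hxball : x ∈ Metric.ball w δ := by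
      rw [mem_ball_iff_norm]
      rcases Nat.eq_zero_or_pos r with hr | hr
      · have : x - w = 0 := by
          funext i; exact absurd i.2 (by omega)
        rw [this, norm_zero]; exact hδ
      · rw [pi_norm_lt_iff hδ]
        intro i
        rw [Real.norm_eq_abs, Pi.sub_apply]
        have h1 : (n:ℝ) * w i ≤ (⌈(n:ℝ) * w i⌉ : ℝ) := Int.le_ceil _
        have h2 : (⌈(n:ℝ) * w i⌉ : ℝ) < (n:ℝ) * w i + 1 := Int.ceil_lt_add_one _
        have hnn : x i - w i = ((⌈(n:ℝ) * w i⌉ : ℝ) - (n:ℝ) * w i) / n := by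
          simp only [hx]
          rw [sub_div, mul_div_cancel_left₀ _ hn0.ne']
        rw [hnn, abs_of_nonneg (div_nonneg (by linarith) hn0.le)]
        calc ((⌈(n:ℝ) * w i⌉ : ℝ) - (n:ℝ) * w i) / n < 1 / n :=
              (div_lt_div_iff_of_pos_right hn0).mpr (by linarith)
          _ < δ := hδn
    have hqx : 0 < q x := hball hxball
    have hmx : (fun i => ((⌈(n:ℝ) * w i⌉ : ℤ) : ℝ)) = (n:ℝ) • x := by
      funext i
      simp only [hx, Pi.smul_apply, smul_eq_mul]
      field_simp
    rw [hmx, smul_dotProduct, mulVec_smul, dotProduct_smul]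
    simp only [smul_eq_mul]
    have : (0:ℝ) < (n:ℝ) * ((n:ℝ) * q x) := by positivity
    exact this
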